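/- Let G be a connected simple graph on a finite vertex type V with at least s vertices, whose diameter equals 3h + z where h, z ∈ ℕ, h ≥ 1, z ≤ 2, and let s ≥ 2. Suppose N : V → Finset V assigns to each vertex v a set N(v) of s closest vertices to v, let S ⊆ V satisfy S ∩ N(v) ≠ ∅ for every v ∈ V, and let w ∈ V maximize d_N(w) := max_{x∈N(w)} dist(w,x). Define Est to be the maximum of: (i) ecc(x) over all x ∈ S ∪ {w} ∪ N(w), and (ii) d_N(u) + d_N(v) over all pairs u, v ∈ V such that B(u, d_N(u)−1) and B(v, d_N(v)−1) are disjoint and no edge of G joins a vertex of B(u, d_N(u)−1) to a vertex of B(v, d_N(v)−1). Then 2h + z ≤ Est ≤ 3h + z. -/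

import Mathlib

/-- The closed ball of radius `r` around `v` in the graph `G`. -/
def SimpleGraph.closedBallN {V : Type*} (G : SimpleGraph V) (v : V) (r : ℕ) : Set V :=
  {x | G.dist v x ≤ r}

/-- The eccentricity of a vertex `v`: the largest distance from `v` to a vertex of the graph. -/
noncomputable def SimpleGraph.ecc {V : Type*} [Fintype V] (G : SimpleGraph V) (v : V) : ℕ :=
  Finset.univ.sup (G.dist v)


open SimpleGraph

lemma dist_getVert_le {V : Type*} {G : SimpleGraph V} (hG : G.Connected) :
    ∀ {u v : V} (p : G.Walk u v) (i : ℕ), G.dist u (p.getVert i) ≤ i := by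
  intro u v p
  induction p with
  | nil => intro i; rw [SimpleGraph.Walk.getVert_of_length_le _ (Nat.zero_le _)]; simp [SimpleGraph.dist_self]
  | @cons u b v hadj q ih =>
    intro i
    cases i with
    | zero => simp [SimpleGraph.Walk.getVert_zero]
    | succ n =>
      rw [SimpleGraph.Walk.getVert_cons_succ]
      calc G.dist u (q.getVert n) ≤ G.dist u b + G.dist b (q.getVert n) :=
            hG.dist_triangle
        _ ≤ 1 + n := by
            have h1 : G.dist u b ≤ 1 := by
              simpa using SimpleGraph.dist_le hadj.toWalk
            exact Nat.add_le_add h1 (ih n)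
        _ = n + 1 := by omega

lemma dist_getVert_right_le {V : Type*} {G : SimpleGraph V} (hG : G.Connected) :
    ∀ {u v : V} (p : G.Walk u v) (i : ℕ), G.dist (p.getVert i) v ≤ p.length - i := by
  intro u v p
  induction p with
  | nil => intro i; rw [SimpleGraph.Walk.getVert_of_length_le _ (Nat.zero_le _)]; simp [SimpleGraph.dist_self]
  | @cons u b v hadj q ih =>
    intro i
    cases i with
    | zero =>
      rw [SimpleGraph.Walk.getVert_zero]
      calc G.dist u v ≤ G.dist u b + G.dist b v := hG.dist_triangle
        _ ≤ 1 + q.length := by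
            have h1 : G.dist u b ≤ 1 := by simpa using SimpleGraph.dist_le hadj.toWalk
            exact Nat.add_le_add h1 (SimpleGraph.dist_le q)
        _ = (q.cons hadj).length - 0 := by simp [SimpleGraph.Walk.length_cons]; omega
    | succ n =>
      rw [SimpleGraph.Walk.getVert_cons_succ]
      calc G.dist (q.getVert n) v ≤ q.length - n := ih n
        _ = (q.cons hadj).length - (n+1) := by simp [SimpleGraph.Walk.length_cons]

lemma exists_geodesic {V : Type*} {G : SimpleGraph V} (hG : G.Connected) (u v : V) :
    ∃ p : G.Walk u v, p.length = G.dist u v ∧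
      ∀ i, i ≤ p.length →
        G.dist u (p.getVert i) = i ∧ G.dist (p.getVert i) v = p.length - i := by
  obtain ⟨p, hp⟩ := hG.exists_walk_length_eq_dist u v
  refine ⟨p, hp, fun i hi => ?_⟩
  have h1 := dist_getVert_le hG p i
  have h2 := dist_getVert_right_le hG p i
  have h3 : G.dist u v ≤ G.dist u (p.getVert i) + G.dist (p.getVert i) v :=
    hG.dist_triangle
  omega

theorem approx_diam_estimate {V : Type*} [Fintype V] [DecidableEq V] [Nonempty V]
    (G : SimpleGraph V) (hG : G.Connected) (h z s : ℕ)
    (hh : 1 ≤ h) (hz : z ≤ 2) (hs : 2 ≤ s) (hsV : s ≤ Fintype.card V)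
    (hdiam : G.diam = 3 * h + z)
    (N : V → Finset V) (hNcard : ∀ v : V, (N v).card = s)
    (hNclosest : ∀ v : V, ∀ x ∈ N v, ∀ y ∉ N v, G.dist v x ≤ G.dist v y)
    (S : Finset V) (hS : ∀ v : V, ∃ p ∈ S, p ∈ N v)
    (dN : V → ℕ) (hdN : ∀ v : V, dN v = (N v).sup (G.dist v))
    (w : V) (hw : ∀ u : V, dN u ≤ dN w)
    (Est : ℕ)
    (hEst : Est = max ((S ∪ {w} ∪ N w).sup G.ecc)
        (sSup {d : ℕ | ∃ u v : V,
          (Disjoint (G.closedBallN u (dN u - 1)) (G.closedBallN v (dN v - 1)) ∧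
            ∀ x ∈ G.closedBallN u (dN u - 1), ∀ y ∈ G.closedBallN v (dN v - 1), ¬ G.Adj x y) ∧
          d = dN u + dN v})) :
    2 * h + z ≤ Est ∧ Est ≤ 3 * h + z := by
  classical
  set P : Set ℕ := {d : ℕ | ∃ u v : V,
      (Disjoint (G.closedBallN u (dN u - 1)) (G.closedBallN v (dN v - 1)) ∧
        ∀ x ∈ G.closedBallN u (dN u - 1), ∀ y ∈ G.closedBallN v (dN v - 1), ¬ G.Adj x y) ∧
      d = dN u + dN v} with hP
  have hetop : G.ediam ≠ ⊤ := G.ediam_ne_top_of_diam_ne_zero (by rw [hdiam]; omega)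
  have hdle : ∀ x y : V, G.dist x y ≤ 3 * h + z := fun x y => hdiam ▸ G.dist_le_diam hetop
  have heccle : ∀ x : V, G.ecc x ≤ 3 * h + z := fun x =>
    Finset.sup_le (fun y _ => hdle x y)
  have heccge : ∀ x y : V, G.dist x y ≤ G.ecc x := fun x y =>
    Finset.le_sup (Finset.mem_univ y)
  have hNne : ∀ v : V, (N v).Nonempty := fun v =>
    Finset.card_pos.mp (by rw [hNcard]; omega)
  have hdN_mem : ∀ v : V, ∀ x ∈ N v, G.dist v x ≤ dN v := fun v x hx =>
    (hdN v) ▸ Finset.le_sup hx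
  have hdN_att : ∀ v : V, ∃ x ∈ N v, G.dist v x = dN v := by
    intro v
    obtain ⟨x, hx, he⟩ := Finset.exists_mem_eq_sup (N v) (hNne v) (G.dist v)
    exact ⟨x, hx, ((hdN v).trans he).symm⟩
  have hdNpos : ∀ v : V, 1 ≤ dN v := by
    intro v
    obtain ⟨x, hx, y, hy, hxy⟩ := Finset.one_lt_card.mp
      (show 1 < (N v).card by rw [hNcard]; omega)
    have key : ∀ t ∈ N v, t ≠ v → 1 ≤ dN v := by
      intro t ht htv
      have h1 : 0 < G.dist v t := hG.pos_dist_of_ne (Ne.symm htv)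
      have h2 := hdN_mem v t ht
      omega
    rcases eq_or_ne x v with rfl | hxv
    · exact key y hy (fun hyv => hxy (hyv ▸ rfl))
    · exact key x hx hxv
  have hball : ∀ v x : V, G.dist v x ≤ dN v - 1 → x ∈ N v := by
    intro v x hx
    by_contra hxn
    obtain ⟨x0, hx0, he⟩ := hdN_att v
    have h1 := hNclosest v x0 hx0 x hxn
    have h2 := hdNpos v
    omega
  -- any admissible pair gives a lower bound on the distance
  have hpair : ∀ u v : V,
      (Disjoint (G.closedBallN u (dN u - 1)) (G.closedBallN v (dN v - 1)) ∧
        ∀ x ∈ G.closedBallN u (dN u - 1), ∀ y ∈ G.closedBallN v (dN v - 1), ¬ G.Adj x y) →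
      dN u + dN v ≤ G.dist u v := by
    rintro u v ⟨hdisj, hedge⟩
    by_contra hcon
    push_neg at hcon
    have hu1 := hdNpos u
    have hv1 := hdNpos v
    by_cases hk : G.dist u v ≤ dN u - 1
    · have hv_u : v ∈ G.closedBallN u (dN u - 1) := hk
      have hv_v : v ∈ G.closedBallN v (dN v - 1) := by
        show G.dist v v ≤ _
        simp [SimpleGraph.dist_self]
      exact (Set.disjoint_left.mp hdisj hv_u) hv_v
    · push_neg at hk
      obtain ⟨p, hplen, hpi⟩ := exists_geodesic hG u v
      obtain ⟨hq1, hq2⟩ := hpi (dN u - 1) (by omega)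
      have hqball : p.getVert (dN u - 1) ∈ G.closedBallN u (dN u - 1) := le_of_eq hq1
      have hcm : G.dist v (p.getVert (dN u - 1)) = G.dist (p.getVert (dN u - 1)) v :=
        SimpleGraph.dist_comm (G := G) (u := v) (v := p.getVert (dN u - 1))
      by_cases hb : G.dist v (p.getVert (dN u - 1)) ≤ dN v - 1
      · exact (Set.disjoint_left.mp hdisj hqball) hb
      · push_neg at hb
        obtain ⟨hr1, hr2⟩ := hpi (dN u - 1 + 1) (by omega)
        have hadj := p.adj_getVert_succ (show dN u - 1 < p.length by omega)
        have hrball : p.getVert (dN u - 1 + 1) ∈ G.closedBallN v (dN v - 1) := by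
          show G.dist v _ ≤ _
          rw [SimpleGraph.dist_comm]
          omega
        exact hedge _ hqball _ hrball hadj
  have hPsub : ∀ d ∈ P, d ≤ 3 * h + z := by
    rintro d ⟨u, v, hcond, rfl⟩
    exact le_trans (hpair u v hcond) (hdle u v)
  have hsSup_le : sSup P ≤ 3 * h + z := by
    rcases Set.eq_empty_or_nonempty P with he | hne
    · rw [he, csSup_empty]
      exact Nat.zero_le _
    · exact csSup_le hne hPsub
  have hEst1 : (S ∪ {w} ∪ N w).sup G.ecc ≤ Est := hEst ▸ le_max_left _ _
  have hEst2 : sSup P ≤ Est := hEst ▸ le_max_right _ _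
  obtain ⟨a, b, hab⟩ := SimpleGraph.exists_dist_eq_diam (G := G)
  rw [hdiam] at hab
  constructor
  · by_contra hc
    push_neg at hc
    have hmemT1 : ∀ p ∈ S ∪ {w} ∪ N w, G.ecc p ≤ Est := fun p hp =>
      le_trans (Finset.le_sup hp) hEst1
    have hstep1 : ∀ p ∈ S ∪ {w} ∪ N w, h + 1 ≤ G.dist p a ∧ h + 1 ≤ G.dist p b := by
      intro p hp
      have h1 := heccge p a
      have h2 := heccge p b
      have h3 := hmemT1 p hp
      have htr : G.dist a b ≤ G.dist a p + G.dist p b := hG.dist_triangle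
      have htr2 : G.dist b a ≤ G.dist b p + G.dist p a := hG.dist_triangle
      have hc1 : G.dist a p = G.dist p a := SimpleGraph.dist_comm (G := G) (u := a) (v := p)
      have hc2 : G.dist b p = G.dist p b := SimpleGraph.dist_comm (G := G) (u := b) (v := p)
      have hc3 : G.dist b a = G.dist a b := SimpleGraph.dist_comm (G := G) (u := b) (v := a)
      constructor <;> omega
    have hdNa : h + 1 ≤ dN a := by
      obtain ⟨p, hpS, hpN⟩ := hS a
      have h1 := (hstep1 p (by simp [Finset.mem_union, hpS])).1
      have h2 := hdN_mem a p hpN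
      have h3 : G.dist a p = G.dist p a := SimpleGraph.dist_comm (G := G) (u := a) (v := p)
      omega
    have hdNb : h + 1 ≤ dN b := by
      obtain ⟨p, hpS, hpN⟩ := hS b
      have h1 := (hstep1 p (by simp [Finset.mem_union, hpS])).2
      have h2 := hdN_mem b p hpN
      have h3 : G.dist b p = G.dist p b := SimpleGraph.dist_comm (G := G) (u := b) (v := p)
      omega
    by_cases hcond : Disjoint (G.closedBallN a (dN a - 1)) (G.closedBallN b (dN b - 1)) ∧
        ∀ x ∈ G.closedBallN a (dN a - 1), ∀ y ∈ G.closedBallN b (dN b - 1), ¬ G.Adj x y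
    · have hmem : dN a + dN b ∈ P := ⟨a, b, hcond, rfl⟩
      have hbdd : BddAbove P := ⟨3 * h + z, fun d hd => hPsub d hd⟩
      have h1 := le_csSup hbdd hmem
      omega
    · -- the balls around a and b intersect or are joined by an edge
      have hkey : G.dist a b ≤ (dN a - 1) + 1 + (dN b - 1) := by
        rcases not_and_or.mp hcond with hnd | hne
        · obtain ⟨x, hxa, hxb⟩ := Set.not_disjoint_iff.mp hnd
          have t1 : G.dist a b ≤ G.dist a x + G.dist x b := hG.dist_triangle
          have t2 : G.dist x b = G.dist b x := SimpleGraph.dist_comm (G := G) (u := x) (v := b)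
          have hxa' : G.dist a x ≤ dN a - 1 := hxa
          have hxb' : G.dist b x ≤ dN b - 1 := hxb
          omega
        · push_neg at hne
          obtain ⟨x, hxa, y, hyb, hadj⟩ := hne
          have t1 : G.dist a b ≤ G.dist a x + G.dist x b := hG.dist_triangle
          have t2 : G.dist x b ≤ G.dist x y + G.dist y b := hG.dist_triangle
          have t3 : G.dist x y ≤ 1 := by simpa using SimpleGraph.dist_le hadj.toWalk
          have t4 : G.dist y b = G.dist b y := SimpleGraph.dist_comm (G := G) (u := y) (v := b)
          have hxa' : G.dist a x ≤ dN a - 1 := hxa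
          have hyb' : G.dist b y ≤ dN b - 1 := hyb
          omega
      have h2dNw : 3 * h + z + 1 ≤ 2 * dN w := by
        have h1 := hw a
        have h2 := hw b
        omega
      -- now look along a geodesic from w to a
      have hia : dN w - 1 ≤ G.dist w a := by
        by_contra hcon2
        push_neg at hcon2
        have haN : a ∈ N w := hball w a (by omega)
        have h1 := (hstep1 a (by simp [Finset.mem_union, haN])).1
        have h2 : G.dist a a = 0 := SimpleGraph.dist_self (G := G) (v := a)
        omega
      obtain ⟨p, hplen, hpi⟩ := exists_geodesic hG w a
      obtain ⟨hq1, hq2⟩ := hpi (dN w - 1) (by omega)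
      have hqN : p.getVert (dN w - 1) ∈ N w := hball w _ (le_of_eq hq1)
      have h1 := (hstep1 (p.getVert (dN w - 1)) (by simp [Finset.mem_union, hqN])).1
      have heccw : G.dist w a ≤ G.ecc w := heccge w a
      have hw_mem : G.ecc w ≤ Est := hmemT1 w (by simp)
      have hwpos := hdNpos w
      omega
  · rw [hEst]
    exact max_le (Finset.sup_le fun x _ => heccle x) hsSup_le
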